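/- Let (X, ρ, μ) be an Ahlfors regular metric measure space of dimension d > 0 with finite measure, and suppose there exist constants c₃ > 0 and ε > 0 and arbitrarily large integers N such that X admits a partition into N measurable regions of measure μ(X)/N, each contained in a ball of radius c₃ N^{-1/d}. If X is not connected, writing X as the disjoint union of two nonempty open sets Y and W, one derives a contradiction: μ(Y) would be an integer multiple of μ(X)/N for all such N with c₃ N^{-1/d} less than the distance between Y and W, which is impossible. Hence a disconnected Ahlfors regular space of finite measure does not admit, for all sufficiently large N, equal-measure partitions into N regions of diameter at most 2 c₃ N^{-1/d}. -/

import Mathlib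

open MeasureTheory Metric Set
open scoped ENNReal NNReal

-- Auxiliary: from non-total-boundedness extract an ε-separated sequence.
private lemma exists_sep_seq {X : Type*} [MetricSpace X]
    (h : ¬ TotallyBounded (Set.univ : Set X)) :
    ∃ ε > (0:ℝ), ∃ f : ℕ → X, ∀ m n, m < n → ε ≤ dist (f m) (f n) := by
  classical
  rw [Metric.totallyBounded_iff] at h
  push_neg at h
  obtain ⟨ε, εpos, hε⟩ := h
  have key : ∀ s : Finset X, ∃ x : X, ∀ y ∈ s, ε ≤ dist x y := by
    intro s
    obtain ⟨x, -, hx⟩ := not_subset.mp (hε (s : Set X) s.finite_toSet)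
    refine ⟨x, fun y hy => ?_⟩
    by_contra hlt
    push_neg at hlt
    exact hx (Set.mem_biUnion (by exact_mod_cast hy) (Metric.mem_ball.mpr hlt))
  choose g hg using key
  let F : ℕ → Finset X := fun n =>
    Nat.rec (motive := fun _ => Finset X) ∅ (fun _ s => insert (g s) s) n
  let f : ℕ → X := fun n => g (F n)
  have hF : ∀ n, F (n+1) = insert (f n) (F n) := fun n => rfl
  have hmem : ∀ m n, m < n → f m ∈ F n := by
    intro m n h
    induction n with
    | zero => omega
    | succ n ih =>
      rw [hF]
      rcases Nat.lt_succ_iff_lt_or_eq.mp h with h | h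
      · exact Finset.mem_insert_of_mem (ih h)
      · subst h; exact Finset.mem_insert_self _ _
  refine ⟨ε, εpos, f, fun m n hmn => ?_⟩
  rw [dist_comm]
  exact hg (F n) (f m) (hmem m n hmn)

theorem no_equal_measure_partition_of_disconnected
    {X : Type*} [MetricSpace X] [CompleteSpace X]
    [MeasurableSpace X] [BorelSpace X] (μ : Measure X)
    (d c₁ c₂ : ℝ) (hd : 0 < d) (hc₁ : 0 < c₁) (hc₁₂ : c₁ ≤ c₂)
    (hfin : μ Set.univ ≠ ⊤)
    (hAR : ∀ (x : X) (r : ℝ), 0 < r →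
      ENNReal.ofReal r ≤ EMetric.diam (Set.univ : Set X) →
      ENNReal.ofReal (c₁ * r ^ d) ≤ μ (Metric.ball x r) ∧
        μ (Metric.ball x r) ≤ ENNReal.ofReal (c₂ * r ^ d))
    (Y W : Set X) (hYopen : IsOpen Y) (hWopen : IsOpen W)
    (hYne : Y.Nonempty) (hWne : W.Nonempty) (hYW : Disjoint Y W)
    (hcover : Y ∪ W = Set.univ) :
    ∀ c₃ : ℝ, 0 < c₃ →
      ¬ ∃ N₀ : ℕ, ∀ N : ℕ, N₀ ≤ N →
        ∃ P : Fin N → Set X,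
          (∀ i, MeasurableSet (P i)) ∧
          Pairwise (Function.onFun Disjoint P) ∧
          (⋃ i, P i) = Set.univ ∧
          ∀ i, μ (P i) = μ Set.univ / N ∧
            Metric.diam (P i) ≤ 2 * c₃ * (N : ℝ) ^ (-(1 / d)) := by
  classical
  intro c₃ hc₃
  rintro ⟨N₀, H⟩
  obtain ⟨y0, hy0⟩ := hYne
  obtain ⟨w0, hw0⟩ := hWne
  have hy0w0 : y0 ≠ w0 := fun h => Set.disjoint_left.mp hYW hy0 (h ▸ hw0)
  set D : ℝ := dist y0 w0 with hD
  have hDpos : 0 < D := dist_pos.mpr hy0w0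
  have hdiam : ∀ r : ℝ, r ≤ D → ENNReal.ofReal r ≤ EMetric.diam (Set.univ : Set X) := by
    intro r hr
    calc ENNReal.ofReal r ≤ ENNReal.ofReal D := ENNReal.ofReal_le_ofReal hr
    _ = edist y0 w0 := (edist_dist _ _).symm
    _ ≤ EMetric.diam (Set.univ : Set X) :=
        EMetric.edist_le_diam_of_mem (Set.mem_univ _) (Set.mem_univ _)
  have ballpos : ∀ (x : X) (r : ℝ), 0 < r → r ≤ D → 0 < μ (Metric.ball x r) := by
    intro x r hr hrD
    refine lt_of_lt_of_le ?_ (hAR x r hr (hdiam r hrD)).1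
    exact ENNReal.ofReal_pos.mpr (by positivity)
  -- X is totally bounded, hence compact
  have hTB : TotallyBounded (Set.univ : Set X) := by
    by_contra h
    obtain ⟨ε, εpos, f, hf⟩ := exists_sep_seq h
    set r : ℝ := min (ε/2) D with hr
    have hrpos : 0 < r := lt_min (by linarith) hDpos
    have hrD : r ≤ D := min_le_right _ _
    have hre : r ≤ ε/2 := min_le_left _ _
    have hdisj : Pairwise (Function.onFun Disjoint (fun n => Metric.ball (f n) r)) := by
      intro m n hmn
      refine Set.disjoint_left.mpr fun z hzm hzn => ?_
      have hsep : ε ≤ dist (f m) (f n) := by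
        rcases lt_or_gt_of_ne hmn with h | h
        · exact hf m n h
        · rw [dist_comm]; exact hf n m h
      rw [Metric.mem_ball] at hzm hzn
      have ht := dist_triangle (f m) z (f n)
      have hc : dist (f m) z = dist z (f m) := dist_comm _ _
      linarith
    have hlow : ∀ n : ℕ, ENNReal.ofReal (c₁ * r ^ d) ≤ μ (Metric.ball (f n) r) :=
      fun n => (hAR (f n) r hrpos (hdiam r hrD)).1
    have hc0 : ENNReal.ofReal (c₁ * r ^ d) ≠ 0 :=
      (ENNReal.ofReal_pos.mpr (by positivity)).ne'
    have : (⊤ : ℝ≥0∞) ≤ μ Set.univ := by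
      calc (⊤ : ℝ≥0∞) = ∑' _ : ℕ, ENNReal.ofReal (c₁ * r ^ d) :=
            (ENNReal.tsum_const_eq_top_of_ne_zero hc0).symm
      _ ≤ ∑' n : ℕ, μ (Metric.ball (f n) r) := ENNReal.tsum_le_tsum hlow
      _ = μ (⋃ n : ℕ, Metric.ball (f n) r) :=
            (measure_iUnion hdisj fun n => measurableSet_ball).symm
      _ ≤ μ Set.univ := measure_mono (Set.subset_univ _)
    exact hfin (top_le_iff.mp this)
  have : CompactSpace X :=
    ⟨TotallyBounded.isCompact_of_isClosed hTB isClosed_univ⟩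
  -- Y and W are closed
  have hYc : Y = Wᶜ := by
    apply Set.Subset.antisymm (Set.subset_compl_iff_disjoint_right.mpr hYW)
    intro x hx
    have hxu : x ∈ Y ∪ W := by rw [hcover]; trivial
    rcases hxu with h | h
    · exact h
    · exact absurd h hx
  have hWc : W = Yᶜ := by
    apply Set.Subset.antisymm (Set.subset_compl_iff_disjoint_right.mpr hYW.symm)
    intro x hx
    have hxu : x ∈ Y ∪ W := by rw [hcover]; trivial
    rcases hxu with h | h
    · exact absurd h hx
    · exact h
  have hYclosed : IsClosed Y := hYc ▸ hWopen.isClosed_compl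
  have hWclosed : IsClosed W := hWc ▸ hYopen.isClosed_compl
  -- positive separation
  obtain ⟨δ, δpos, hδ⟩ := hYW.exists_thickenings hYclosed.isCompact hWclosed
  have hsep : ∀ y ∈ Y, ∀ w ∈ W, δ ≤ dist y w := by
    intro y hy w hw
    by_contra h
    push_neg at h
    have hw1 : w ∈ Metric.thickening δ Y :=
      Metric.mem_thickening_iff.mpr ⟨y, hy, by rwa [dist_comm]⟩
    have hw2 : w ∈ Metric.thickening δ W := Metric.self_subset_thickening δpos W hw
    exact Set.disjoint_left.mp hδ hw1 hw2
  -- positive measures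
  have μY_pos : 0 < μ Y := by
    obtain ⟨r1, r1pos, hball⟩ := Metric.isOpen_iff.mp hYopen y0 hy0
    have hrp : 0 < min r1 D := lt_min r1pos hDpos
    calc (0:ℝ≥0∞) < μ (Metric.ball y0 (min r1 D)) := ballpos _ _ hrp (min_le_right _ _)
    _ ≤ μ Y := measure_mono ((Metric.ball_subset_ball (min_le_left _ _)).trans hball)
  have μW_pos : 0 < μ W := by
    obtain ⟨r2, r2pos, hball⟩ := Metric.isOpen_iff.mp hWopen w0 hw0
    have hrp : 0 < min r2 D := lt_min r2pos hDpos
    calc (0:ℝ≥0∞) < μ (Metric.ball w0 (min r2 D)) := ballpos _ _ hrp (min_le_right _ _)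
    _ ≤ μ W := measure_mono ((Metric.ball_subset_ball (min_le_left _ _)).trans hball)
  have hμY_ne_top : μ Y ≠ ⊤ := ne_top_of_le_ne_top hfin (measure_mono (Set.subset_univ _))
  have hμsum : μ Y + μ W = μ Set.univ := by
    rw [← measure_union hYW hWopen.measurableSet, hcover]
  have hμYlt : μ Y < μ Set.univ := by
    rw [← hμsum]
    exact ENNReal.lt_add_right hμY_ne_top μW_pos.ne'
  set a : ℝ := (μ Y).toReal with ha
  set m : ℝ := (μ Set.univ).toReal with hm
  have hapos : 0 < a := ENNReal.toReal_pos μY_pos.ne' hμY_ne_top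
  have ham : a < m := (ENNReal.toReal_lt_toReal hμY_ne_top hfin).mpr hμYlt
  have hmpos : 0 < m := lt_trans hapos ham
  -- eventually the diameter bound beats δ
  have htend : Filter.Tendsto (fun N : ℕ => 2 * c₃ * (N:ℝ) ^ (-(1/d)))
      Filter.atTop (nhds 0) := by
    have h1 : Filter.Tendsto (fun x : ℝ => x ^ (-(1/d))) Filter.atTop (nhds 0) :=
      tendsto_rpow_neg_atTop (by positivity)
    have h2 := (h1.comp tendsto_natCast_atTop_atTop).const_mul (2 * c₃)
    simpa [Function.comp] using h2
  obtain ⟨N₁, hN₁⟩ := Filter.eventually_atTop.mp (htend.eventually_lt_const δpos)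
  set M : ℕ := max (max N₀ N₁) 1 with hM
  -- key counting step
  have count : ∀ N : ℕ, M ≤ N → ∃ k : ℕ, 0 < k ∧ k < N ∧ a * N = k * m := by
    intro N hN
    have hN0 : N₀ ≤ N := le_trans (le_trans (le_max_left _ _) (le_max_left _ _)) hN
    have hN1 : N₁ ≤ N := le_trans (le_trans (le_max_right _ _) (le_max_left _ _)) hN
    have hNpos : 0 < N := lt_of_lt_of_le (lt_of_lt_of_le zero_lt_one (le_max_right _ _)) hN
    obtain ⟨P, hmeas, hdisjP, hcovP, hP⟩ := H N hN0
    have hNd : 2 * c₃ * (N:ℝ) ^ (-(1/d)) < δ := hN₁ N hN1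
    have hpiece_ne : ∀ i, μ (P i) ≠ 0 := by
      intro i
      rw [(hP i).1]
      exact (ENNReal.div_pos (lt_trans μY_pos hμYlt).ne'
        (ENNReal.natCast_ne_top N)).ne'
    have hbdd : ∀ i, Bornology.IsBounded (P i) :=
      fun i => isCompact_univ.isBounded.subset (Set.subset_univ _)
    have subYW : ∀ i, P i ⊆ Y ∨ P i ⊆ W := by
      intro i
      obtain ⟨x, hx⟩ := nonempty_of_measure_ne_zero (hpiece_ne i)
      have keydist : ∀ z ∈ P i, ∀ z' ∈ P i, dist z z' < δ := by
        intro z hz z' hz'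
        calc dist z z' ≤ Metric.diam (P i) := Metric.dist_le_diam_of_mem (hbdd i) hz hz'
        _ ≤ 2 * c₃ * (N:ℝ) ^ (-(1/d)) := (hP i).2
        _ < δ := hNd
      have hxu : x ∈ Y ∪ W := by rw [hcover]; trivial
      rcases hxu with hxY | hxW
      · left
        intro z hz
        have hzu : z ∈ Y ∪ W := by rw [hcover]; trivial
        rcases hzu with h | h
        · exact h
        · exact absurd (keydist x hx z hz) (not_lt.mpr (hsep x hxY z h))
      · right
        intro z hz
        have hzu : z ∈ Y ∪ W := by rw [hcover]; trivial
        rcases hzu with h | h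
        · exact absurd (keydist z hz x hx) (not_lt.mpr (hsep z h x hxW))
        · exact h
    set S : Finset (Fin N) := Finset.univ.filter (fun i => P i ⊆ Y) with hS
    have hYeq : Y = ⋃ i ∈ S, P i := by
      apply Set.Subset.antisymm
      · intro x hxY
        have : x ∈ ⋃ i, P i := by rw [hcovP]; trivial
        obtain ⟨i, hi⟩ := Set.mem_iUnion.mp this
        have hiY : P i ⊆ Y :=
          (subYW i).resolve_right fun h => Set.disjoint_left.mp hYW hxY (h hi)
        exact Set.mem_biUnion (Finset.mem_filter.mpr ⟨Finset.mem_univ _, hiY⟩) hi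
      · exact Set.iUnion₂_subset fun i hi => (Finset.mem_filter.mp hi).2
    have hμYeq : μ Y = S.card * (μ Set.univ / N) := by
      rw [hYeq, measure_biUnion_finset (fun i _ j _ hij => hdisjP hij)
        (fun i _ => hmeas i)]
      rw [Finset.sum_congr rfl (fun i _ => (hP i).1), Finset.sum_const, nsmul_eq_mul]
    refine ⟨S.card, ?_, ?_, ?_⟩
    · rcases Nat.eq_zero_or_pos S.card with h | h
      · exfalso
        rw [h] at hμYeq
        simp at hμYeq
        exact μY_pos.ne' hμYeq
      · exact h
    · -- S.card < N via real inequality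
      have hreal : a = S.card * (m / N) := by
        rw [ha, hμYeq, ENNReal.toReal_mul, ENNReal.toReal_div]
        simp [hm]
      have hNr : (0:ℝ) < N := by exact_mod_cast hNpos
      by_contra hcontra
      push_neg at hcontra
      have : (N:ℝ) ≤ S.card := by exact_mod_cast hcontra
      have : m ≤ a := by
        rw [hreal]
        calc m = (N:ℝ) * (m / N) := by field_simp
        _ ≤ S.card * (m / N) := by
            apply mul_le_mul_of_nonneg_right this (by positivity)
      linarith
    · have hreal : a = S.card * (m / N) := by
        rw [ha, hμYeq, ENNReal.toReal_mul, ENNReal.toReal_div]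
        simp [hm]
      have hNr : (0:ℝ) < N := by exact_mod_cast hNpos
      rw [hreal]; rw [mul_assoc, div_mul_cancel₀ m hNr.ne']
  -- apply with M and M+1 and derive a contradiction
  obtain ⟨k, hk1, hk2, hk3⟩ := count M le_rfl
  obtain ⟨k', hk1', hk2', hk3'⟩ := count (M+1) (Nat.le_succ M)
  have hcast : ((M+1 : ℕ) : ℝ) = (M:ℝ) + 1 := by push_cast; ring
  rw [hcast] at hk3'
  have hrmul : (k:ℝ) * ((M:ℝ)+1) * m = (k':ℝ) * (M:ℝ) * m := by
    linear_combination (M:ℝ) * hk3' - ((M:ℝ)+1) * hk3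
  have hreq : (k:ℝ) * ((M:ℝ)+1) = (k':ℝ) * (M:ℝ) :=
    mul_right_cancel₀ hmpos.ne' hrmul
  have hnat : k * (M+1) = k' * M := by exact_mod_cast hreq
  have he : k * M + k = k' * M := by rw [← hnat]; ring
  have hsub : k = k' * M - k * M := by omega
  have hdvd : M ∣ k := by
    rw [hsub]
    exact Nat.dvd_sub (dvd_mul_left M k') (dvd_mul_left M k)
  exact absurd (Nat.le_of_dvd hk1 hdvd) (not_le.mpr hk2)
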